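/- In the K-user compound interference channel, for any fixed power exponent vector r ∈ ℝ^K with r_k ≤ 0, the GDoF value achieved by user k under TIN in the compound channel equals the GDoF value achieved by user k under TIN with the same power vector in the regular counterpart channel. That is, for every k: max{0, min over states l_k of [α_{kk}^{[l_k]} + r_k − max_{j≠k}{0, α_{kj}^{[l_k]} + r_j}]} = max{0, ᾱ_{kk} + r_k − max_{j≠k}{0, ᾱ_{kj} + r_j}}, where ᾱ_{kk} = min_{l_k} α_{kk}^{[l_k]} and ᾱ_{kj} = ᾱ_{kk} − min_{l_k}(α_{kk}^{[l_k]} − α_{kj}^{[l_k]}) for j ≠ k. -/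

import Mathlib

open Finset

private lemma sub_max_zero (a m : ℝ) : a - max 0 m = min a (a - m) := by
  rcases le_total 0 m with h | h
  · rw [max_eq_right h, min_eq_right (by linarith)]
  · rw [max_eq_left h, sub_zero, min_eq_left (by linarith)]

private lemma inf'_add_const {ι : Type*} (s : Finset ι) (H : s.Nonempty) (f : ι → ℝ) (c : ℝ) :
    s.inf' H (fun i => f i + c) = s.inf' H f + c := by
  apply le_antisymm
  · obtain ⟨i, hi, hfi⟩ := s.exists_mem_eq_inf' H f
    calc s.inf' H (fun i => f i + c) ≤ f i + c := Finset.inf'_le _ hi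
      _ = s.inf' H f + c := by rw [hfi]
  · apply Finset.le_inf'
    intro i hi
    exact add_le_add_left (Finset.inf'_le _ hi) c

private lemma const_sub_sup' {ι : Type*} (s : Finset ι) (H : s.Nonempty) (f : ι → ℝ) (c : ℝ) :
    c - s.sup' H f = s.inf' H (fun i => c - f i) := by
  apply le_antisymm
  · apply Finset.le_inf'
    intro i hi
    exact sub_le_sub_left (Finset.le_sup' _ hi) c
  · obtain ⟨i, hi, hfi⟩ := s.exists_mem_eq_sup' H f
    calc s.inf' H (fun i => c - f i) ≤ c - f i := Finset.inf'_le _ hi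
      _ = c - s.sup' H f := by rw [hfi]

private lemma inf'_min {ι : Type*} (s : Finset ι) (H : s.Nonempty) (a b : ι → ℝ) :
    s.inf' H (fun i => min (a i) (b i)) = min (s.inf' H a) (s.inf' H b) := by
  apply le_antisymm
  · apply le_min
    · exact Finset.le_inf' _ _ fun i hi =>
        (Finset.inf'_le _ hi).trans (min_le_left _ _)
    · exact Finset.le_inf' _ _ fun i hi =>
        (Finset.inf'_le _ hi).trans (min_le_right _ _)
  · apply Finset.le_inf'
    intro i hi
    exact le_min ((min_le_left _ _).trans (Finset.inf'_le _ hi))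
      ((min_le_right _ _).trans (Finset.inf'_le _ hi))

private lemma bisup_eq {ι : Type*} [Fintype ι] (J : Finset ι) (hJ : J.Nonempty)
    (k : ι) (hk : k ∉ J) (u : ι → ℝ) :
    (⨆ j ∈ J, u j) = max 0 (J.sup' hJ u) := by
  haveI : Nonempty ι := ⟨k⟩
  apply le_antisymm
  · apply ciSup_le
    intro j
    exact Real.iSup_le (fun h => le_max_of_le_right (Finset.le_sup' u h)) (le_max_left 0 _)
  · have hbdd : BddAbove (Set.range fun j => ⨆ _ : j ∈ J, u j) :=
      (Set.finite_range _).bddAbove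
    apply max_le
    · have h0 : (⨆ _ : k ∈ J, u k) = 0 := by
        haveI : IsEmpty (k ∈ J) := ⟨hk⟩
        exact Real.iSup_of_isEmpty _
      calc (0 : ℝ) = ⨆ _ : k ∈ J, u k := h0.symm
        _ ≤ ⨆ j, ⨆ _ : j ∈ J, u j := le_ciSup hbdd k
    · apply Finset.sup'_le
      intro j hj
      calc u j = ⨆ _ : j ∈ J, u j := (ciSup_pos (f := fun _ : j ∈ J => u j) hj).symm
        _ ≤ ⨆ j, ⨆ _ : j ∈ J, u j := le_ciSup hbdd j

theorem compound_regular_same_tin_gdof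
    (K : ℕ) (hK : 1 ≤ K) (S : Fin K → Type) [∀ k, Fintype (S k)] [∀ k, Nonempty (S k)]
    (α : (k : Fin K) → S k → Fin K → ℝ)
    (r : Fin K → ℝ) (hr : ∀ k, r k ≤ 0)
    (ᾱ : Fin K → Fin K → ℝ)
    (hdiag : ∀ k, ᾱ k k = ⨅ l : S k, α k l k)
    (hoff : ∀ k j, j ≠ k →
      ᾱ k j = (⨅ l : S k, α k l k) - ⨅ l : S k, (α k l k - α k l j)) :
    ∀ k : Fin K,
      max 0 (⨅ l : S k, (α k l k + r k -
          max 0 (⨆ j ∈ Finset.univ.erase k, (α k l j + r j)))) =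
      max 0 (ᾱ k k + r k -
          max 0 (⨆ j ∈ Finset.univ.erase k, (ᾱ k j + r j))) := by
  intro k
  set J : Finset (Fin K) := Finset.univ.erase k with hJdef
  have hk : k ∉ J := Finset.notMem_erase k _
  have hA : ᾱ k k = Finset.univ.inf' Finset.univ_nonempty (fun l : S k => α k l k) := by
    rw [hdiag k, Finset.inf'_univ_eq_ciInf]
  by_cases hJ : J.Nonempty
  · -- nonempty interference set
    -- rewrite the suprema
    have hmax : ∀ (x : ℝ), max 0 (max 0 x) = max 0 x := fun x => by
      rw [← max_assoc, max_self]
    have hb1 : ∀ l : S k, max 0 (⨆ j ∈ J, (α k l j + r j)) =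
        max 0 (J.sup' hJ (fun j => α k l j + r j)) := fun l => by
      rw [bisup_eq J hJ k hk, hmax]
    have hb2 : max 0 (⨆ j ∈ J, (ᾱ k j + r j)) =
        max 0 (J.sup' hJ (fun j => ᾱ k j + r j)) := by
      rw [bisup_eq J hJ k hk, hmax]
    set A : ℝ := Finset.univ.inf' Finset.univ_nonempty (fun l : S k => α k l k) with hAdef
    set β : Fin K → ℝ := fun j =>
      Finset.univ.inf' Finset.univ_nonempty (fun l : S k => α k l k - α k l j) with hβdef
    have hβ : ∀ j ∈ J, ᾱ k j = A - β j := by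
      intro j hj
      have hjk : j ≠ k := (Finset.mem_erase.mp hj).1
      rw [hoff k j hjk, ← Finset.inf'_univ_eq_ciInf, ← Finset.inf'_univ_eq_ciInf]
    congr 1
    -- left side
    have lhs_eq : (⨅ l : S k, (α k l k + r k -
        max 0 (⨆ j ∈ J, (α k l j + r j)))) =
        min (A + r k) (J.inf' hJ (fun j => β j + (r k - r j))) := by
      rw [← Finset.inf'_univ_eq_ciInf]
      have step1 : ∀ l ∈ (Finset.univ : Finset (S k)),
          (α k l k + r k - max 0 (⨆ j ∈ J, (α k l j + r j))) =
          min (α k l k + r k) (J.inf' hJ (fun j => (α k l k - α k l j) + (r k - r j))) := by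
        intro l _
        rw [hb1 l, sub_max_zero, const_sub_sup']
        congr 1
        apply Finset.inf'_congr _ rfl
        intro j _
        ring
      rw [Finset.inf'_congr _ rfl step1, inf'_min, inf'_add_const]
      congr 1
      rw [Finset.inf'_comm Finset.univ_nonempty hJ]
      apply Finset.inf'_congr _ rfl
      intro j _
      rw [← inf'_add_const]
    have rhs_eq : (ᾱ k k + r k - max 0 (⨆ j ∈ J, (ᾱ k j + r j))) =
        min (A + r k) (J.inf' hJ (fun j => β j + (r k - r j))) := by
      rw [hb2, sub_max_zero, const_sub_sup', hA]
      congr 1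
      apply Finset.inf'_congr _ rfl
      intro j hj
      rw [hβ j hj]
      ring
    rw [lhs_eq, rhs_eq]
  · -- empty interference set
    rw [Finset.not_nonempty_iff_eq_empty] at hJ
    haveI : Nonempty (Fin K) := ⟨k⟩
    have hsup0 : ∀ u : Fin K → ℝ, (⨆ j ∈ J, u j) = 0 := by
      intro u
      rw [hJ]
      have : ∀ j : Fin K, (⨆ _ : j ∈ (∅ : Finset (Fin K)), u j) = 0 := by
        intro j
        haveI : IsEmpty (j ∈ (∅ : Finset (Fin K))) := ⟨fun h => absurd h (Finset.notMem_empty j)⟩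
        exact Real.iSup_of_isEmpty _
      simp only [this, ciSup_const]
    simp only [hsup0]
    have : (⨅ l : S k, (α k l k + r k - max 0 0)) = ᾱ k k + r k - max 0 0 := by
      simp only [max_self, sub_zero]
      rw [← Finset.inf'_univ_eq_ciInf, inf'_add_const, hA]
    rw [this]
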